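/- Let f : ℝⁿ → ℝ be differentiable, bounded below by f_low, and let {x_k}, {α_k} be sequences with α_0 > 0, γ > 0, γ₁ ∈ (0,1), γ₂ ≥ 1, where at each step either (successful) f(x_{k+1}) ≤ f(x_k) − γα_k² and α_{k+1} = γ₂α_k, or (unsuccessful) x_{k+1} = x_k and α_{k+1} = γ₁α_k. Then α_k → 0. -/

import Mathlib

open Filter

theorem stmt_3 {n : ℕ} (f : EuclideanSpace ℝ (Fin n) → ℝ) (f_low : ℝ)
    (hf : Differentiable ℝ f) (hlow : ∀ y, f_low ≤ f y)
    (x : ℕ → EuclideanSpace ℝ (Fin n)) (α : ℕ → ℝ)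
    (γ γ₁ γ₂ : ℝ) (hγ : 0 < γ) (hγ₁ : γ₁ ∈ Set.Ioo (0 : ℝ) 1) (hγ₂ : 1 ≤ γ₂)
    (hα0 : 0 < α 0)
    (hstep : ∀ k, (f (x (k + 1)) ≤ f (x k) - γ * (α k) ^ 2 ∧ α (k + 1) = γ₂ * α k) ∨
      (x (k + 1) = x k ∧ α (k + 1) = γ₁ * α k)) :
    Tendsto α atTop (nhds 0) := by
  obtain ⟨hγ₁0, hγ₁1⟩ := hγ₁
  have hγ₂0 : (0:ℝ) < γ₂ := lt_of_lt_of_le one_pos hγ₂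
  have hαpos : ∀ k, 0 < α k := by
    intro k
    induction k with
    | zero => exact hα0
    | succ k ih =>
      rcases hstep k with ⟨_, h⟩ | ⟨_, h⟩
      · rw [h]; exact mul_pos hγ₂0 ih
      · rw [h]; exact mul_pos hγ₁0 ih
  have hmono : ∀ k, f (x (k + 1)) ≤ f (x k) := by
    intro k
    rcases hstep k with ⟨h, _⟩ | ⟨h, _⟩
    · nlinarith [sq_nonneg (α k)]
    · rw [h]
  have hanti : Antitone (fun k => f (x k)) := antitone_nat_of_succ_le hmono
  -- key: for each ε > 0, eventually no "successful drop" step has α k ≥ ε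
  have key : ∀ ε : ℝ, 0 < ε → ∃ N : ℕ, ∀ k, N ≤ k →
      ¬(ε ≤ α k ∧ f (x (k + 1)) ≤ f (x k) - γ * (α k) ^ 2) := by
    intro ε hε
    by_contra hcon
    push_neg at hcon
    choose g hg1 hg2 hg3 using hcon
    set φ : ℕ → ℕ := fun m => Nat.rec (g 0) (fun _ p => g (p + 1)) m with hφ
    have hφ0 : φ 0 = g 0 := rfl
    have hφs : ∀ m, φ (m + 1) = g (φ m + 1) := fun m => rfl
    have hclaim : ∀ m : ℕ, f (x (φ m + 1)) ≤ f (x 0) - (m + 1) * (γ * ε ^ 2) := by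
      intro m
      induction m with
      | zero =>
        have h1 := hg3 0
        have h2 := hg2 0
        have h3 : f (x (φ 0)) ≤ f (x 0) := hanti (Nat.zero_le _)
        rw [hφ0] at h3 ⊢
        have hsq : ε ^ 2 ≤ α (g 0) ^ 2 := pow_le_pow_left₀ hε.le h2 2
        have := mul_le_mul_of_nonneg_left hsq hγ.le
        push_cast
        linarith
      | succ m ih =>
        have h1 := hg3 (φ m + 1)
        have h2 := hg2 (φ m + 1)
        have hge := hg1 (φ m + 1)
        have h3 : f (x (φ (m + 1))) ≤ f (x (φ m + 1)) := by
          rw [hφs]; exact hanti hge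
        rw [hφs] at h3 ⊢
        have hsq : ε ^ 2 ≤ α (g (φ m + 1)) ^ 2 := pow_le_pow_left₀ hε.le h2 2
        have := mul_le_mul_of_nonneg_left hsq hγ.le
        push_cast
        push_cast at ih
        linarith
    obtain ⟨m, hm⟩ := exists_nat_gt ((f (x 0) - f_low) / (γ * ε ^ 2))
    have hpos : 0 < γ * ε ^ 2 := by positivity
    have hdiv : f (x 0) - f_low < m * (γ * ε ^ 2) := by
      rw [div_lt_iff₀ hpos] at hm; linarith
    have := hclaim m
    have := hlow (x (φ m + 1))
    nlinarith
  rw [Metric.tendsto_atTop]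
  intro δ hδ
  set ε : ℝ := δ / (2 * γ₂) with hε
  have hεpos : 0 < ε := by positivity
  obtain ⟨N, hN⟩ := key ε hεpos
  -- bound: for j, α (N + j) ≤ max (γ₂ * ε) (γ₁ ^ j * α N)
  have hbound : ∀ j : ℕ, α (N + j) ≤ max (γ₂ * ε) (γ₁ ^ j * α N) := by
    intro j
    induction j with
    | zero => simp
    | succ j ih =>
      have hNj : N ≤ N + j := Nat.le_add_right _ _
      rcases hstep (N + j) with ⟨hdrop, h⟩ | ⟨_, h⟩
      · have hlt : α (N + j) < ε := by
          by_contra hge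
          exact hN (N + j) hNj ⟨le_of_not_gt hge, hdrop⟩
        have : α (N + j + 1) = γ₂ * α (N + j) := h
        have h2 : α (N + j + 1) ≤ γ₂ * ε := by
          rw [this]; exact mul_le_mul_of_nonneg_left hlt.le hγ₂0.le
        calc α (N + (j + 1)) = α (N + j + 1) := by ring_nf
          _ ≤ γ₂ * ε := h2
          _ ≤ max (γ₂ * ε) (γ₁ ^ (j + 1) * α N) := le_max_left _ _
      · have heq : α (N + (j + 1)) = γ₁ * α (N + j) := by
          have : N + (j + 1) = (N + j) + 1 := by ring
          rw [this, h]
        rcases max_choice (γ₂ * ε) (γ₁ ^ j * α N) with hc | hc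
        · rw [hc] at ih
          have : γ₁ * α (N + j) ≤ γ₂ * ε := by
            nlinarith [hαpos (N + j)]
          rw [heq]
          exact le_trans this (le_max_left _ _)
        · rw [hc] at ih
          have : γ₁ * α (N + j) ≤ γ₁ ^ (j + 1) * α N := by
            have := mul_le_mul_of_nonneg_left ih hγ₁0.le
            calc γ₁ * α (N + j) ≤ γ₁ * (γ₁ ^ j * α N) := this
              _ = γ₁ ^ (j + 1) * α N := by ring
          rw [heq]
          exact le_trans this (le_max_right _ _)
  have hpow : Tendsto (fun j : ℕ => γ₁ ^ j * α N) atTop (nhds 0) := by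
    have := tendsto_pow_atTop_nhds_zero_of_lt_one hγ₁0.le hγ₁1
    simpa using this.mul_const (α N)
  have hev : ∀ᶠ j in atTop, γ₁ ^ j * α N < δ / 2 := by
    have : Set.Iio (δ / 2) ∈ nhds (0:ℝ) := Iio_mem_nhds (by linarith)
    exact hpow.eventually this
  obtain ⟨J, hJ⟩ := hev.exists_forall_of_atTop
  refine ⟨N + J, fun m hm => ?_⟩
  have h1 : α m ≤ max (γ₂ * ε) (γ₁ ^ (m - N) * α N) := by
    have : N + (m - N) = m := by omega
    calc α m = α (N + (m - N)) := by rw [this]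
      _ ≤ _ := hbound (m - N)
  have h2 : γ₂ * ε = δ / 2 := by
    field_simp [hε]
    rw [hε]; field_simp [hγ₂0.ne']
  have h3 : γ₁ ^ (m - N) * α N < δ / 2 := hJ (m - N) (by omega)
  rw [Real.dist_eq, sub_zero, abs_of_pos (hαpos m)]
  calc α m ≤ max (γ₂ * ε) (γ₁ ^ (m - N) * α N) := h1
    _ < δ := by rw [h2]; exact max_lt (by linarith) (by linarith)
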